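/- Let a and b be integers greater than 1 such that a^m ≠ b^n for all positive integers m and n, and let k be a positive integer with a^{k−1} ≤ t < a^k for a positive integer t. Then there exist infinitely many positive integers n for which there exists a positive integer m with t·a^{km} ≤ b^n < (t+1)·a^{km}. -/

import Mathlib

open Real

/-- Density of natural multiples of an irrational number mod 1. -/
lemma dense_fract_nat {α : ℝ} (hα : Irrational α) {c d : ℝ} (hc : 0 ≤ c) (hcd : c < d)
    (hd : d ≤ 1) (N : ℕ) :
    ∃ n : ℕ, N < n ∧ c < Int.fract (n * α) ∧ Int.fract (n * α) < d := by
  set ε : ℝ := min (d - c) 1 / 2 with hεdef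
  have hε : 0 < ε := by
    have : 0 < min (d - c) 1 := lt_min (by linarith) one_pos
    positivity
  have hε1 : ε < d - c := by
    have h1 : min (d - c) 1 ≤ d - c := min_le_left _ _
    linarith
  have hε2 : ε < 1 := by
    have h1 : min (d - c) 1 ≤ 1 := min_le_right _ _
    linarith
  obtain ⟨K, hK⟩ := exists_nat_one_div_lt hε
  obtain ⟨p, hp0, _, hp⟩ := Real.exists_nat_abs_mul_sub_round_le α (Nat.succ_pos K)
  set r : ℤ := round ((p : ℝ) * α) with hr
  set δ : ℝ := (p : ℝ) * α - r with hδdef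
  have hpirr : Irrational ((p : ℝ) * α) := hα.natCast_mul hp0.ne'
  have hδ0 : δ ≠ 0 := sub_ne_zero.mpr (hpirr.ne_int r)
  have hδε : |δ| < ε := by
    have h9 : (1 : ℝ) / (K + 1 + 1) < 1 / (K + 1) := by
      apply one_div_lt_one_div_of_lt
      · positivity
      · linarith
    calc |δ| ≤ 1 / (↑(K + 1) + 1) := hp
      _ < ε := by push_cast; push_cast at h9; linarith
  set M : ℕ := N + 1 with hM
  have hM1 : (1 : ℝ) ≤ M := by exact_mod_cast Nat.one_le_iff_ne_zero.mpr (by omega)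
  rcases hδ0.lt_or_gt with hneg | hpos
  · -- δ < 0, use g = -δ
    set g : ℝ := -δ with hg
    have hg0 : 0 < g := by simp only [hg]; linarith
    have hgε : g < ε := by rw [abs_of_neg hneg] at hδε; simpa [hg] using hδε
    set T : ℝ := (M : ℝ) + 1 - d with hT
    have hT0 : 0 < T := by rw [hT]; linarith
    have h3 : (0 : ℤ) ≤ ⌊T / g⌋ := Int.floor_nonneg.mpr (by positivity)
    set j : ℕ := ⌊T / g⌋.toNat + 1 with hj
    have hjr : (j : ℝ) = (⌊T / g⌋ : ℝ) + 1 := by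
      have h5 : ((⌊T / g⌋.toNat : ℕ) : ℝ) = ((⌊T / g⌋ : ℤ) : ℝ) := by
        exact_mod_cast Int.toNat_of_nonneg h3
      rw [hj, Nat.cast_add, Nat.cast_one, h5]
    have hjg1 : T < (j : ℝ) * g := by
      have h2 : T / g < (⌊T / g⌋ : ℝ) + 1 := Int.lt_floor_add_one _
      have h6 : T / g < (j : ℝ) := by rw [hjr]; linarith
      calc T = T / g * g := by field_simp
        _ < (j : ℝ) * g := mul_lt_mul_of_pos_right h6 hg0
    have hjg2 : (j : ℝ) * g ≤ T + g := by
      have h1 : (⌊T / g⌋ : ℝ) ≤ T / g := Int.floor_le _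
      have h6 : (j : ℝ) ≤ T / g + 1 := by rw [hjr]; linarith
      calc (j : ℝ) * g ≤ (T / g + 1) * g := mul_le_mul_of_nonneg_right h6 hg0.le
        _ = T + g := by field_simp
    have hfract : Int.fract ((↑(j * p) : ℝ) * α) = (j : ℝ) * δ + ((M : ℝ) + 1) := by
      have e1 : (↑(j * p) : ℝ) * α = (j : ℝ) * δ + (↑(j * r) : ℤ) := by
        push_cast [hδdef]; ring
      rw [e1, Int.fract_add_intCast]
      have e3 : (j : ℝ) * δ = ((j : ℝ) * δ + ((M : ℝ) + 1)) + (↑(-(M + 1 : ℤ)) : ℤ) := by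
        push_cast; ring
      conv_lhs => rw [e3]
      rw [Int.fract_add_intCast]
      refine Int.fract_eq_self.mpr ⟨?_, ?_⟩
      · have e2 : (j : ℝ) * δ = -((j : ℝ) * g) := by rw [hg]; ring
        rw [e2]
        have : (j : ℝ) * g ≤ (M : ℝ) + 1 - d + g := by rw [← hT]; exact hjg2
        linarith
      · have e2 : (j : ℝ) * δ = -((j : ℝ) * g) := by rw [hg]; ring
        rw [e2]
        have : (M : ℝ) + 1 - d < (j : ℝ) * g := by rw [← hT]; exact hjg1
        linarith
    refine ⟨j * p, ?_, ?_, ?_⟩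
    · have hjM : (M : ℝ) < (j : ℝ) := by
        have hMT : (M : ℝ) ≤ T := by rw [hT]; linarith
        nlinarith [hjg1, hg0, hgε, hε2]
      have hjM' : M < j := by exact_mod_cast hjM
      calc N < M := by omega
        _ ≤ j := hjM'.le
        _ ≤ j * p := Nat.le_mul_of_pos_right j hp0
    · rw [hfract]
      have e2 : (j : ℝ) * δ = -((j : ℝ) * g) := by rw [hg]; ring
      rw [e2]
      have h7 : (j : ℝ) * g ≤ (M : ℝ) + 1 - d + g := by rw [← hT]; exact hjg2
      linarith
    · rw [hfract]
      have e2 : (j : ℝ) * δ = -((j : ℝ) * g) := by rw [hg]; ring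
      rw [e2]
      have h7 : (M : ℝ) + 1 - d < (j : ℝ) * g := by rw [← hT]; exact hjg1
      linarith
  · -- δ > 0, use g = δ
    have hgε : δ < ε := by rw [abs_of_pos hpos] at hδε; exact hδε
    set T : ℝ := (M : ℝ) + c with hT
    have hT0 : 0 < T := by rw [hT]; linarith
    have h3 : (0 : ℤ) ≤ ⌊T / δ⌋ := Int.floor_nonneg.mpr (by positivity)
    set j : ℕ := ⌊T / δ⌋.toNat + 1 with hj
    have hjr : (j : ℝ) = (⌊T / δ⌋ : ℝ) + 1 := by
      have h5 : ((⌊T / δ⌋.toNat : ℕ) : ℝ) = ((⌊T / δ⌋ : ℤ) : ℝ) := by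
        exact_mod_cast Int.toNat_of_nonneg h3
      rw [hj, Nat.cast_add, Nat.cast_one, h5]
    have hjg1 : T < (j : ℝ) * δ := by
      have h2 : T / δ < (⌊T / δ⌋ : ℝ) + 1 := Int.lt_floor_add_one _
      have h6 : T / δ < (j : ℝ) := by rw [hjr]; linarith
      calc T = T / δ * δ := by field_simp
        _ < (j : ℝ) * δ := mul_lt_mul_of_pos_right h6 hpos
    have hjg2 : (j : ℝ) * δ ≤ T + δ := by
      have h1 : (⌊T / δ⌋ : ℝ) ≤ T / δ := Int.floor_le _
      have h6 : (j : ℝ) ≤ T / δ + 1 := by rw [hjr]; linarith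
      calc (j : ℝ) * δ ≤ (T / δ + 1) * δ := mul_le_mul_of_nonneg_right h6 hpos.le
        _ = T + δ := by field_simp
    have hT1 : (M : ℝ) + c < (j : ℝ) * δ := by rw [← hT]; exact hjg1
    have hT2 : (j : ℝ) * δ ≤ (M : ℝ) + c + δ := by
      have := hjg2; rw [hT] at this; linarith
    have hfract : Int.fract ((↑(j * p) : ℝ) * α) = (j : ℝ) * δ - (M : ℝ) := by
      have e1 : (↑(j * p) : ℝ) * α = (j : ℝ) * δ + (↑(j * r) : ℤ) := by
        push_cast [hδdef]; ring
      rw [e1, Int.fract_add_intCast]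
      have e3 : (j : ℝ) * δ = ((j : ℝ) * δ - (M : ℝ)) + (↑(M : ℤ) : ℤ) := by
        push_cast; ring
      conv_lhs => rw [e3]
      rw [Int.fract_add_intCast]
      refine Int.fract_eq_self.mpr ⟨?_, ?_⟩
      · linarith
      · linarith
    refine ⟨j * p, ?_, ?_, ?_⟩
    · have hjM : (M : ℝ) < (j : ℝ) := by
        nlinarith [hT1, hpos, hgε, hε2, hc]
      have hjM' : M < j := by exact_mod_cast hjM
      calc N < M := by omega
        _ ≤ j := hjM'.le
        _ ≤ j * p := Nat.le_mul_of_pos_right j hp0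
    · rw [hfract]; linarith
    · rw [hfract]; linarith

theorem stmt_9 (a b t k : ℕ) (ha : 1 < a) (hb : 1 < b)
    (h : ∀ m n : ℕ, 0 < m → 0 < n → a ^ m ≠ b ^ n)
    (ht : 0 < t) (hk : 0 < k) (htlb : a ^ (k - 1) ≤ t) (htub : t < a ^ k) :
    {n : ℕ | 0 < n ∧ ∃ m : ℕ, 0 < m ∧
      t * a ^ (k * m) ≤ b ^ n ∧ b ^ n < (t + 1) * a ^ (k * m)}.Infinite := by
  set A : ℕ := a ^ k with hAdef
  have hA : 1 < A := Nat.one_lt_pow hk.ne' ha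
  have hA1 : (1 : ℝ) < (A : ℝ) := by exact_mod_cast hA
  have hA0 : (0 : ℝ) < (A : ℝ) := by positivity
  have hb1 : (1 : ℝ) < (b : ℝ) := by exact_mod_cast hb
  set α : ℝ := Real.logb A b with hαdef
  have hαpos : 0 < α := Real.logb_pos hA1 hb1
  have hlogA : (0 : ℝ) < Real.log A := Real.log_pos hA1
  -- irrationality of α
  have hirr : Irrational α := by
    rw [Irrational]
    intro hmem
    obtain ⟨q, hq⟩ := hmem
    have hq0 : 0 < q := by
      have : (0 : ℝ) < (q : ℝ) := hq ▸ hαpos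
      exact_mod_cast this
    have hnum : 0 < q.num := Rat.num_pos.mpr hq0
    have hden : 0 < q.den := q.pos
    have h1 : Real.log b = (q : ℝ) * Real.log A := by
      have h2 : Real.logb A b = (q : ℝ) := hq.symm
      rw [Real.logb, div_eq_iff hlogA.ne'] at h2
      exact h2
    have hqr : (q : ℝ) = (q.num : ℝ) / (q.den : ℝ) := by
      exact_mod_cast (Rat.num_div_den q).symm
    have h3 : (q.den : ℝ) * Real.log b = (q.num : ℝ) * Real.log A := by
      rw [h1, hqr]
      field_simp
    have h4 : Real.log ((b : ℝ) ^ q.den) = Real.log ((A : ℝ) ^ q.num.toNat) := by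
      rw [Real.log_pow, Real.log_pow]
      have : ((q.num.toNat : ℕ) : ℝ) = (q.num : ℝ) := by
        exact_mod_cast Int.toNat_of_nonneg hnum.le
      rw [this]
      exact_mod_cast h3
    have h5 : (b : ℝ) ^ q.den = (A : ℝ) ^ q.num.toNat := by
      have hb0 : (0 : ℝ) < (b : ℝ) ^ q.den := by positivity
      have hA0' : (0 : ℝ) < (A : ℝ) ^ q.num.toNat := by positivity
      exact Real.log_injOn_pos (Set.mem_Ioi.mpr hb0) (Set.mem_Ioi.mpr hA0') h4
    have h6 : b ^ q.den = A ^ q.num.toNat := by exact_mod_cast h5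
    have h7 : a ^ (k * q.num.toNat) = b ^ q.den := by
      rw [pow_mul, ← hAdef, h6]
    have hnt : 0 < q.num.toNat := by omega
    exact h (k * q.num.toNat) q.den (by positivity) hden h7
  -- interval endpoints
  set c : ℝ := Real.logb A t with hcdef
  set d : ℝ := Real.logb A (t + 1 : ℕ) with hddef
  have ht1 : (1 : ℝ) ≤ (t : ℝ) := by exact_mod_cast ht
  have ht0 : (0 : ℝ) < (t : ℝ) := by linarith
  have hc : 0 ≤ c := Real.logb_nonneg hA1 ht1
  have hcd : c < d := by
    apply Real.logb_lt_logb hA1 ht0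
    push_cast
    linarith
  have hd : d ≤ 1 := by
    have hle : ((t + 1 : ℕ) : ℝ) ≤ (A : ℝ) := by exact_mod_cast htub
    have := (Real.logb_le_logb hA1 (by positivity) hA0).mpr hle
    rwa [Real.logb_self_eq_one hA1] at this
  apply Set.infinite_of_forall_exists_gt
  intro N
  obtain ⟨n, hn, hf1, hf2⟩ := dense_fract_nat hirr hc hcd hd (max N ⌈α⁻¹⌉₊)
  have hnN : N < n := lt_of_le_of_lt (le_max_left _ _) hn
  have hn1 : (1 : ℝ) < (n : ℝ) * α := by
    have h1 : (⌈α⁻¹⌉₊ : ℝ) < (n : ℝ) := by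
      exact_mod_cast lt_of_le_of_lt (le_max_right _ _) hn
    have h2 : α⁻¹ ≤ (⌈α⁻¹⌉₊ : ℝ) := Nat.le_ceil _
    have h3 : α⁻¹ < (n : ℝ) := lt_of_le_of_lt h2 h1
    calc (1 : ℝ) = α⁻¹ * α := (inv_mul_cancel₀ hαpos.ne').symm
      _ < (n : ℝ) * α := mul_lt_mul_of_pos_right h3 hαpos
  set F : ℝ := Int.fract ((n : ℝ) * α) with hF
  set mz : ℤ := ⌊(n : ℝ) * α⌋ with hmz
  have hmz1 : 1 ≤ mz := Int.le_floor.mpr (by exact_mod_cast hn1.le)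
  set m : ℕ := mz.toNat with hm
  have hm0 : 0 < m := by omega
  have hmzr : ((m : ℕ) : ℝ) = (mz : ℝ) := by
    exact_mod_cast Int.toNat_of_nonneg (by omega : (0 : ℤ) ≤ mz)
  have hbA : (A : ℝ) ^ α = (b : ℝ) := Real.rpow_logb hA0 hA1.ne' (by linarith)
  have e1 : ((b : ℝ)) ^ (n : ℕ) = (A : ℝ) ^ ((n : ℝ) * α) := by
    rw [mul_comm, Real.rpow_mul hA0.le, hbA, Real.rpow_natCast]
  have e2 : (A : ℝ) ^ ((n : ℝ) * α) = (A : ℝ) ^ (m : ℕ) * (A : ℝ) ^ F := by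
    have hsplit : (n : ℝ) * α = (m : ℝ) + F := by
      rw [hmzr, hF, hmz]
      exact (Int.floor_add_fract _).symm
    rw [hsplit, Real.rpow_add hA0, Real.rpow_natCast]
  have hAc : (A : ℝ) ^ c = (t : ℝ) := Real.rpow_logb hA0 hA1.ne' ht0
  have hAd : (A : ℝ) ^ d = ((t : ℝ) + 1) := by
    have := Real.rpow_logb hA0 hA1.ne' (show (0:ℝ) < ((t + 1 : ℕ) : ℝ) by positivity)
    rw [← hddef] at this
    rw [this]
    push_cast
    ring
  have hApm : (0 : ℝ) < (A : ℝ) ^ (m : ℕ) := by positivity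
  have hlt1 : (t : ℝ) < (A : ℝ) ^ F := by
    rw [← hAc]
    exact (Real.rpow_lt_rpow_left_iff hA1).mpr hf1
  have hlt2 : (A : ℝ) ^ F < (t : ℝ) + 1 := by
    rw [← hAd]
    exact (Real.rpow_lt_rpow_left_iff hA1).mpr hf2
  have hlow : (t : ℝ) * (A : ℝ) ^ (m : ℕ) < (b : ℝ) ^ (n : ℕ) := by
    rw [e1, e2]
    nlinarith [hApm, hlt1]
  have hhigh : (b : ℝ) ^ (n : ℕ) < ((t : ℝ) + 1) * (A : ℝ) ^ (m : ℕ) := by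
    rw [e1, e2]
    nlinarith [hApm, hlt2]
  refine ⟨n, ⟨by omega, m, hm0, ?_, ?_⟩, hnN⟩
  · rw [pow_mul, ← hAdef]
    have : t * A ^ m < b ^ n := by exact_mod_cast (by push_cast; exact hlow : ((t * A ^ m : ℕ) : ℝ) < ((b ^ n : ℕ) : ℝ))
    omega
  · rw [pow_mul, ← hAdef]
    exact_mod_cast (by push_cast; exact hhigh : ((b ^ n : ℕ) : ℝ) < (((t + 1) * A ^ m : ℕ) : ℝ))
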